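/- arXiv:1304.6970 — 2 statements merged into one kernel-verified Lean document; each statement's English description precedes it below -/
import Mathlib

section
/- Let A be an essentially small abelian category with finite Hom- and Ext-sets. For objects A, B, C of A, let Ext^1(B,C)_A denote the subset of Ext^1(B,C) of extension classes whose middle term is isomorphic to A, and let g^A_{B,C} denote the number of subobjects C' of A with C' ≅ C and A/C' ≅ B. Then g^A_{B,C} = (|Ext^1(B,C)_A| / |Hom(B,C)|) · (|Aut(A)| / (|Aut(B)| · |Aut(C)|)). -/
open CategoryTheory Limits

section

variable {A : Type*} [Category A] [Abelian A]

/-- An extension of `B` by `C`: a short exact sequence `0 → C → E → B → 0`. -/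
structure ExtensionOf (B C : A) where
  E : A
  ι : C ⟶ E
  π : E ⟶ B
  w : ι ≫ π = 0
  shortExact : (ShortComplex.mk ι π w).ShortExact

/-- Equivalence of extensions: an isomorphism of middle terms commuting with
the structure maps. -/
def ExtensionOf.Equiv {B C : A} (e e' : ExtensionOf B C) : Prop :=
  ∃ φ : e.E ≅ e'.E, e.ι ≫ φ.hom = e'.ι ∧ φ.hom ≫ e'.π = e.π

def extensionSetoid (B C : A) : Setoid (ExtensionOf B C) where
  r := ExtensionOf.Equiv
  iseqv := by
    constructor
    · intro e; exact ⟨Iso.refl _, by simp, by simp⟩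
    · rintro e e' ⟨φ, h₁, h₂⟩
      refine ⟨φ.symm, ?_, ?_⟩
      · rw [← h₁]; simp
      · rw [← h₂]; simp
    · rintro e e' e'' ⟨φ, h₁, h₂⟩ ⟨ψ, h₃, h₄⟩
      refine ⟨φ.trans ψ, ?_, ?_⟩
      · simp only [Iso.trans_hom, ← Category.assoc, h₁, h₃]
      · simp only [Iso.trans_hom, Category.assoc, h₄, h₂]

/-- `Ext¹(B, C)_A₀`: the set of equivalence classes of extensions of `B` by `C`
whose middle term is isomorphic to `A₀`. -/
def ExtClassesWithMiddle (B C A₀ : A) : Type _ :=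
  Quotient (Setoid.comap (Subtype.val : {e : ExtensionOf B C // Nonempty (e.E ≅ A₀)} → _)
    (extensionSetoid B C))

/-- The Hall number `g^A₀_{B,C}`: the number of subobjects `C' ⊆ A₀` with
`C' ≅ C` and `A₀ / C' ≅ B`. -/
noncomputable def hallNumber (A₀ B C : A) : ℕ :=
  Nat.card {S : Subobject A₀ // Nonempty ((S : A) ≅ C) ∧ Nonempty (cokernel S.arrow ≅ B)}

end

section
variable {A : Type*} [Category A] [Abelian A]
variable {B C A₀ : A}

lemma conjSE {C' A₀' B' C A₀ B : A} {ι : C ⟶ A₀} {π : A₀ ⟶ B} {hw : ι ≫ π = 0}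
    (hs : (ShortComplex.mk ι π hw).ShortExact)
    (u : C' ≅ C) (m : A₀ ≅ A₀') (v : B ≅ B') {f' : C' ⟶ A₀'} {g' : A₀' ⟶ B'}
    (hf : f' = u.hom ≫ ι ≫ m.hom) (hg : g' = m.inv ≫ π ≫ v.hom) :
    ∃ hw' : f' ≫ g' = 0, (ShortComplex.mk f' g' hw').ShortExact := by
  subst hf hg
  have hw' : (u.hom ≫ ι ≫ m.hom) ≫ m.inv ≫ π ≫ v.hom = 0 := by
    simp [reassoc_of% hw]
  exact ⟨hw', ShortComplex.shortExact_of_iso (ShortComplex.isoMk u.symm m v (by simp) (by simp)) hs⟩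

/-- The set of short exact sequences with prescribed middle object `A₀`. -/
def Wt (B C A₀ : A) : Type _ :=
  {p : (C ⟶ A₀) × (A₀ ⟶ B) // ∃ hw : p.1 ≫ p.2 = 0, (ShortComplex.mk p.1 p.2 hw).ShortExact}

variable {B C A₀ : A}

def Wt.ι (w : Wt B C A₀) : C ⟶ A₀ := w.1.1
def Wt.π (w : Wt B C A₀) : A₀ ⟶ B := w.1.2
lemma Wt.wzero (w : Wt B C A₀) : w.ι ≫ w.π = 0 := w.2.choose
lemma Wt.se (w : Wt B C A₀) : (ShortComplex.mk w.ι w.π w.wzero).ShortExact := by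
  obtain ⟨hw, hs⟩ := w.2; exact hs

lemma Wt.mono_ι (w : Wt B C A₀) : Mono w.ι := w.se.mono_f
lemma Wt.epi_π (w : Wt B C A₀) : Epi w.π := w.se.epi_g

def Wt.toExtension (w : Wt B C A₀) : ExtensionOf B C :=
  ⟨A₀, w.ι, w.π, w.wzero, w.se⟩

/-- the class of a SES with middle `A₀` -/
def qcl (w : Wt B C A₀) : ExtClassesWithMiddle B C A₀ :=
  Quotient.mk _ ⟨w.toExtension, ⟨Iso.refl A₀⟩⟩

lemma qcl_eq_qcl_iff {w w' : Wt B C A₀} :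
    qcl w = qcl w' ↔ ∃ φ : A₀ ≅ A₀, w.ι ≫ φ.hom = w'.ι ∧ φ.hom ≫ w'.π = w.π := by
  constructor
  · intro h
    exact Quotient.exact h
  · intro h
    exact Quotient.sound h

/-- action of an automorphism of `A₀` on SES's -/
def act (φ : A₀ ≅ A₀) (w : Wt B C A₀) : Wt B C A₀ :=
  ⟨(w.ι ≫ φ.hom, φ.inv ≫ w.π),
    conjSE w.se (Iso.refl C) φ (Iso.refl B) (by simp) (by simp)⟩

@[simp] lemma act_ι (φ : A₀ ≅ A₀) (w : Wt B C A₀) : (act φ w).ι = w.ι ≫ φ.hom := rfl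
@[simp] lemma act_π (φ : A₀ ≅ A₀) (w : Wt B C A₀) : (act φ w).π = φ.inv ≫ w.π := rfl

lemma qcl_act (φ : A₀ ≅ A₀) (w : Wt B C A₀) : qcl (act φ w) = qcl w := by
  rw [qcl_eq_qcl_iff]
  exact ⟨φ.symm, by simp [act, Wt.ι], by simp [act, Wt.π]⟩

lemma exists_act_of_qcl_eq {w w' : Wt B C A₀} (h : qcl w = qcl w') :
    ∃ φ : A₀ ≅ A₀, act φ w = w' := by
  obtain ⟨φ, h1, h2⟩ := qcl_eq_qcl_iff.1 h
  refine ⟨φ, Subtype.ext (Prod.ext ?_ ?_)⟩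
  · exact h1
  · show φ.inv ≫ w.π = w'.π
    rw [← h2, Iso.inv_hom_id_assoc]

lemma qcl_surjective : Function.Surjective (qcl : Wt B C A₀ → ExtClassesWithMiddle B C A₀) := by
  intro x
  obtain ⟨⟨e, he⟩, rfl⟩ := Quotient.exists_rep x
  obtain ⟨ψ⟩ := he
  refine ⟨⟨(e.ι ≫ ψ.hom, ψ.inv ≫ e.π),
    conjSE e.shortExact (Iso.refl C) ψ (Iso.refl B) (by simp) (by simp)⟩, ?_⟩
  apply Quotient.sound
  show ExtensionOf.Equiv _ _
  exact ⟨ψ.symm, by simp [Wt.toExtension, Wt.ι], by simp [Wt.toExtension, Wt.ι, Wt.π]⟩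

/-- the map `Hom(B,C) → stabilizer` -/
def stabOf (v : Wt B C A₀) : Type _ :=
  {φ : A₀ ≅ A₀ // v.ι ≫ φ.hom = v.ι ∧ φ.hom ≫ v.π = v.π}

noncomputable def stabEquiv (v : Wt B C A₀) : (B ⟶ C) ≃ stabOf v := by
  have hw := v.wzero
  have hmono : Mono v.ι := v.mono_ι
  have hepi : Epi v.π := v.epi_π
  have hsq : ∀ f : B ⟶ C, (v.π ≫ f ≫ v.ι) ≫ (v.π ≫ f ≫ v.ι) = 0 := by
    intro f
    simp only [Category.assoc, reassoc_of% hw, zero_comp, comp_zero]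
  refine Equiv.ofBijective (fun f =>
    ⟨⟨𝟙 A₀ + v.π ≫ f ≫ v.ι, 𝟙 A₀ - v.π ≫ f ≫ v.ι, ?_, ?_⟩, ?_, ?_⟩) ⟨?_, ?_⟩
  · simp [Preadditive.comp_sub, Preadditive.add_comp, hsq f]
  · simp [Preadditive.comp_add, Preadditive.sub_comp, hsq f]
  · simp [Preadditive.comp_add, reassoc_of% hw]
  · simp [Preadditive.add_comp, Category.assoc, hw]
  · intro f f' h
    have h' : 𝟙 A₀ + v.π ≫ f ≫ v.ι = 𝟙 A₀ + v.π ≫ f' ≫ v.ι := congrArg (fun ψ => ψ.1.hom) h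
    have h'' : v.π ≫ f ≫ v.ι = v.π ≫ f' ≫ v.ι := by
      exact add_left_cancel h'
    rw [cancel_epi v.π, cancel_mono v.ι] at h''
    exact h''
  · rintro ⟨φ, h1, h2⟩
    have h0 : v.ι ≫ (φ.hom - 𝟙 A₀) = 0 := by
      simp [Preadditive.comp_sub, h1]
    obtain ⟨g, hg⟩ := CokernelCofork.IsColimit.desc' v.se.gIsCokernel (φ.hom - 𝟙 A₀) h0
    have hgc : v.π ≫ g = φ.hom - 𝟙 A₀ := hg
    have hgπ : g ≫ v.π = 0 := by
      rw [← cancel_epi v.π, ← Category.assoc, hgc, Preadditive.sub_comp, h2]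
      simp
    obtain ⟨f, hf⟩ := KernelFork.IsLimit.lift' v.se.fIsKernel g hgπ
    refine ⟨f, ?_⟩
    apply Subtype.ext
    apply Iso.ext
    show 𝟙 A₀ + v.π ≫ f ≫ v.ι = φ.hom
    have hfι : f ≫ v.ι = g := hf
    have h3 : v.π ≫ f ≫ v.ι = φ.hom - 𝟙 A₀ := by rw [hfι]; exact hgc
    rw [h3]
    abel

variable (B C A₀)

lemma inv_comp_eq_of_hom_comp_eq {X Y : A} (ψ : X ≅ X) (p : X ⟶ Y) (h : ψ.hom ≫ p = p) :
    ψ.inv ≫ p = p := by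
  conv_lhs => rw [← h]
  rw [Iso.inv_hom_id_assoc]

noncomputable def repr' : ExtClassesWithMiddle B C A₀ → Wt B C A₀ :=
  fun x => (qcl_surjective x).choose

lemma qcl_repr' (x : ExtClassesWithMiddle B C A₀) : qcl (repr' B C A₀ x) = x :=
  (qcl_surjective x).choose_spec

noncomputable def Fmap : ExtClassesWithMiddle B C A₀ × (A₀ ≅ A₀) → Wt B C A₀ :=
  fun p => act p.2 (repr' B C A₀ p.1)

noncomputable def fiberEquiv (w : Wt B C A₀) :
    stabOf (repr' B C A₀ (qcl w)) ≃ {p // Fmap B C A₀ p = w} := by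
  set v := repr' B C A₀ (qcl w) with hv
  have hex : ∃ φ₀ : A₀ ≅ A₀, act φ₀ v = w :=
    exists_act_of_qcl_eq (qcl_repr' B C A₀ (qcl w))
  set φ₀ := hex.choose with hφ₀def
  have hφ₀ : act φ₀ v = w := hex.choose_spec
  have hι₀ : v.ι ≫ φ₀.hom = w.ι := congrArg Wt.ι hφ₀
  have hπ₀ : φ₀.inv ≫ v.π = w.π := congrArg Wt.π hφ₀
  refine Equiv.ofBijective (fun ψ => ⟨(qcl w, ψ.1 ≪≫ φ₀), ?_⟩) ⟨?_, ?_⟩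
  · apply Subtype.ext
    apply Prod.ext
    · show v.ι ≫ (ψ.1.hom ≫ φ₀.hom) = w.ι
      rw [← Category.assoc, ψ.2.1, hι₀]
    · show (φ₀.inv ≫ ψ.1.inv) ≫ v.π = w.π
      rw [Category.assoc, inv_comp_eq_of_hom_comp_eq ψ.1 v.π ψ.2.2, hπ₀]
  · intro ψ ψ' h
    have h2 : ψ.1.hom ≫ φ₀.hom = ψ'.1.hom ≫ φ₀.hom :=
      congrArg (fun p => Iso.hom p.1.2) h
    rw [cancel_mono φ₀.hom] at h2
    exact Subtype.ext (Iso.ext h2)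
  · rintro ⟨⟨x, φ⟩, h⟩
    have hx : x = qcl w := by
      rw [← qcl_repr' B C A₀ x, ← qcl_act φ (repr' B C A₀ x)]
      exact congrArg qcl h
    subst hx
    have hι : v.ι ≫ φ.hom = w.ι := congrArg Wt.ι h
    have hπ : φ.inv ≫ v.π = w.π := congrArg Wt.π h
    refine ⟨⟨φ ≪≫ φ₀.symm, ?_, ?_⟩, ?_⟩
    · show v.ι ≫ (φ.hom ≫ φ₀.inv) = v.ι
      rw [← Category.assoc, hι, ← hι₀]
      simp
    · show (φ.hom ≫ φ₀.inv) ≫ v.π = v.π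
      rw [Category.assoc, hπ₀, ← hπ, Iso.hom_inv_id_assoc]
    · apply Subtype.ext
      apply Prod.ext
      · rfl
      · apply Iso.ext
        show (φ.hom ≫ φ₀.inv) ≫ φ₀.hom = φ.hom
        simp

noncomputable def bigEquiv :
    (ExtClassesWithMiddle B C A₀ × (A₀ ≅ A₀)) ≃ (Wt B C A₀ × (B ⟶ C)) :=
  (Equiv.sigmaFiberEquiv (Fmap B C A₀)).symm.trans
    ((Equiv.sigmaCongrRight (fun w => (fiberEquiv B C A₀ w).symm.trans (stabEquiv _).symm)).trans
      (Equiv.sigmaEquivProd _ _))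

lemma card2 : Nat.card (ExtClassesWithMiddle B C A₀) * Nat.card (A₀ ≅ A₀)
    = Nat.card (Wt B C A₀) * Nat.card (B ⟶ C) := by
  simpa [Nat.card_prod] using Nat.card_congr (bigEquiv B C A₀)

variable {B C A₀}

/-- the subtype of subobjects appearing in the Hall number -/
def Htype (A₀ B C : A) : Type _ :=
  {S : Subobject A₀ // Nonempty ((S : A) ≅ C) ∧ Nonempty (cokernel S.arrow ≅ B)}

noncomputable def cIso (S : Htype A₀ B C) : ((S.1 : A) ≅ C) := S.2.1.some
noncomputable def bIso (S : Htype A₀ B C) : (cokernel S.1.arrow ≅ B) := S.2.2.some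

/-- base short exact sequence attached to a subobject -/
lemma baseSE (S : Subobject A₀) :
    (ShortComplex.mk S.arrow (cokernel.π S.arrow) (cokernel.condition _)).ShortExact := by
  refine ShortComplex.ShortExact.mk' ?_ ?_ ?_
  · exact ShortComplex.exact_of_g_is_cokernel _ (cokernelIsCokernel S.arrow)
  · exact Subobject.arrow_mono S
  · exact coequalizer.π_epi

noncomputable def Phi (p : Htype A₀ B C × ((B ≅ B) × (C ≅ C))) : Wt B C A₀ :=
  ⟨(p.2.2.hom ≫ (cIso p.1).inv ≫ p.1.1.arrow,
    cokernel.π p.1.1.arrow ≫ (bIso p.1).hom ≫ p.2.1.hom),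
    conjSE (baseSE p.1.1) (p.2.2 ≪≫ (cIso p.1).symm) (Iso.refl A₀) ((bIso p.1) ≪≫ p.2.1)
      (by simp) (by simp)⟩

lemma Phi_bijective : Function.Bijective (Phi : _ → Wt B C A₀) := by
  constructor
  · rintro ⟨S, β, γ⟩ ⟨S', β', γ'⟩ h
    have h1 : γ.hom ≫ (cIso S).inv ≫ S.1.arrow = γ'.hom ≫ (cIso S').inv ≫ S'.1.arrow :=
      congrArg Wt.ι h
    have h2 : cokernel.π S.1.arrow ≫ (bIso S).hom ≫ β.hom
        = cokernel.π S'.1.arrow ≫ (bIso S').hom ≫ β'.hom :=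
      congrArg Wt.π h
    have hSS : S = S' := by
      apply Subtype.ext
      have e1 : Subobject.mk (γ.hom ≫ (cIso S).inv ≫ S.1.arrow) = S.1 :=
        Subobject.mk_eq_of_comm _ (γ ≪≫ (cIso S).symm) (by simp)
      have e2 : Subobject.mk (γ'.hom ≫ (cIso S').inv ≫ S'.1.arrow) = S'.1 :=
        Subobject.mk_eq_of_comm _ (γ' ≪≫ (cIso S').symm) (by simp)
      have e3 : Subobject.mk (γ.hom ≫ (cIso S).inv ≫ S.1.arrow)
          = Subobject.mk (γ'.hom ≫ (cIso S').inv ≫ S'.1.arrow) :=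
        Subobject.mk_eq_mk_of_comm _ _ (Iso.refl C) (by simpa using h1.symm)
      rw [← e1, ← e2]
      exact e3
    subst hSS
    have hmX : Mono ((cIso S).inv ≫ S.1.arrow) := mono_comp _ _
    rw [cancel_mono ((cIso S).inv ≫ S.1.arrow)] at h1
    rw [cancel_epi (cokernel.π S.1.arrow), cancel_epi (bIso S).hom] at h2
    exact Prod.ext rfl (Prod.ext (Iso.ext h2) (Iso.ext h1))
  · intro w
    have hmono : Mono w.ι := w.mono_ι
    set S₀ : Subobject A₀ := Subobject.mk w.ι with hS₀
    set u : ((S₀ : A) ≅ C) := Subobject.underlyingIso w.ι with hu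
    have harrow : S₀.arrow = u.hom ≫ w.ι :=
      (Subobject.underlyingIso_hom_comp_eq_mk w.ι).symm
    have hcol : IsColimit (CokernelCofork.ofπ w.π
        (show S₀.arrow ≫ w.π = 0 by rw [harrow, Category.assoc, w.wzero, comp_zero])) :=
      isCokernelEpiComp w.se.gIsCokernel u.hom harrow
    set d : cokernel S₀.arrow ≅ B :=
      IsColimit.coconePointUniqueUpToIso (cokernelIsCokernel S₀.arrow) hcol with hd
    have hdπ : cokernel.π S₀.arrow ≫ d.hom = w.π := by
      simpa using IsColimit.comp_coconePointUniqueUpToIso_hom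
        (cokernelIsCokernel S₀.arrow) hcol WalkingParallelPair.one
    set SH : Htype A₀ B C := ⟨S₀, ⟨u⟩, ⟨d⟩⟩ with hSH
    refine ⟨⟨SH, (bIso SH).symm ≪≫ d, u.symm ≪≫ cIso SH⟩, ?_⟩
    apply Subtype.ext
    apply Prod.ext
    · show (u.symm ≪≫ cIso SH).hom ≫ (cIso SH).inv ≫ SH.1.arrow = w.ι
      have : SH.1.arrow = u.hom ≫ w.ι := harrow
      rw [this]
      simp
    · show cokernel.π SH.1.arrow ≫ (bIso SH).hom ≫ ((bIso SH).symm ≪≫ d).hom = w.π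
      rw [Iso.trans_hom, Iso.symm_hom, Iso.hom_inv_id_assoc]
      exact hdπ

lemma card1 : Nat.card (Wt B C A₀)
    = Nat.card (Htype A₀ B C) * (Nat.card (B ≅ B) * Nat.card (C ≅ C)) := by
  simpa [Nat.card_prod] using (Nat.card_congr (Equiv.ofBijective Phi Phi_bijective)).symm

end


/-- **Riedtmann–Peng formula.**  In an essentially small abelian
category with finite Hom- and Ext-sets,
`g^A_{B,C} = (|Ext¹(B,C)_A| / |Hom(B,C)|) · (|Aut A| / (|Aut B| · |Aut C|))`. -/
theorem riedtmann_peng_formula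
    {A : Type*} [Category A] [Abelian A] [EssentiallySmall A]
    [∀ X Y : A, Fintype (X ⟶ Y)]
    (A₀ B C : A) :
    (hallNumber A₀ B C : ℚ)
      = ((Nat.card (ExtClassesWithMiddle B C A₀) : ℚ) / (Nat.card (B ⟶ C) : ℚ))
        * ((Nat.card (Aut A₀) : ℚ) / ((Nat.card (Aut B) : ℚ) * (Nat.card (Aut C) : ℚ))) := by
  classical
  haveI : ∀ X Y : A, Finite (X ≅ Y) := fun X Y =>
    Finite.of_injective (fun φ => φ.hom) (fun a b h => Iso.ext h)
  have hAuta : Nat.card (Aut A₀) = Nat.card (A₀ ≅ A₀) := rfl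
  have hAutb : Nat.card (Aut B) = Nat.card (B ≅ B) := rfl
  have hAutc : Nat.card (Aut C) = Nat.card (C ≅ C) := rfl
  have hall_eq : hallNumber A₀ B C = Nat.card (Htype A₀ B C) := rfl
  have h1 := card1 (B := B) (C := C) (A₀ := A₀)
  have h2 := card2 B C A₀
  have hb : 0 < Nat.card (B ≅ B) := Nat.card_pos (α := B ≅ B)
  have hc : 0 < Nat.card (C ≅ C) := Nat.card_pos (α := C ≅ C)
  have hh : 0 < Nat.card (B ⟶ C) := @Nat.card_pos _ ⟨0⟩ _
  rw [hall_eq, hAuta, hAutb, hAutc]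
  have hbq : (Nat.card (B ≅ B) : ℚ) ≠ 0 := Nat.cast_ne_zero.mpr hb.ne'
  have hcq : (Nat.card (C ≅ C) : ℚ) ≠ 0 := Nat.cast_ne_zero.mpr hc.ne'
  have hhq : (Nat.card (B ⟶ C) : ℚ) ≠ 0 := Nat.cast_ne_zero.mpr hh.ne'
  rw [div_mul_div_comm, eq_div_iff (by exact mul_ne_zero hhq (mul_ne_zero hbq hcq))]
  have q1 : (Nat.card (Wt B C A₀) : ℚ)
      = (Nat.card (Htype A₀ B C) : ℚ) * ((Nat.card (B ≅ B) : ℚ) * (Nat.card (C ≅ C) : ℚ)) := by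
    exact_mod_cast congrArg (Nat.cast : ℕ → ℚ) h1
  have q2 : (Nat.card (ExtClassesWithMiddle B C A₀) : ℚ) * (Nat.card (A₀ ≅ A₀) : ℚ)
      = (Nat.card (Wt B C A₀) : ℚ) * (Nat.card (B ⟶ C) : ℚ) := by
    exact_mod_cast congrArg (Nat.cast : ℕ → ℚ) h2
  linear_combination -q2 - (Nat.card (B ⟶ C) : ℚ) * q1
end

section
/- Let A be a hereditary abelian category with enough projectives and let A ∈ A have minimal projective resolution 0 → P_A → Q_A → A → 0, giving the two-periodic complex C_A = (P_A ⇄ Q_A) with d_1 = f_A (the inclusion) and d_0 = 0. Suppose 0 → N• → C_A → M• → 0 is a short exact sequence in C(P) satisfying the condition: H_i(M•) ≠ 0 implies H_{i+1}(N•) = 0 for i = 0, 1. Then there exist objects B, D of A such that M• ≅ C_B and N• ≅ C_D, where C_B, C_D arise from minimal projective resolutions of B and D. -/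
open CategoryTheory Limits ZeroObject

universe v u

variable (A : Type u) [Category.{v} A] [Abelian A]

/-- A two-periodic (Z/2-graded) complex in `A`. -/
structure TwoComplex : Type max u v where
  X₁ : A
  X₀ : A
  d₁ : X₁ ⟶ X₀
  d₀ : X₀ ⟶ X₁
  w₁₀ : d₁ ≫ d₀ = 0
  w₀₁ : d₀ ≫ d₁ = 0

namespace TwoComplex

variable {A}

@[ext] structure Hom (M N : TwoComplex A) : Type v where
  f₁ : M.X₁ ⟶ N.X₁
  f₀ : M.X₀ ⟶ N.X₀
  comm₁ : M.d₁ ≫ f₀ = f₁ ≫ N.d₁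
  comm₀ : M.d₀ ≫ f₁ = f₀ ≫ N.d₀

instance : Category (TwoComplex A) where
  Hom := Hom
  id M := ⟨𝟙 _, 𝟙 _, by simp, by simp⟩
  comp f g := ⟨f.f₁ ≫ g.f₁, f.f₀ ≫ g.f₀, by
      rw [← Category.assoc, f.comm₁, Category.assoc, g.comm₁, ← Category.assoc], by
      rw [← Category.assoc, f.comm₀, Category.assoc, g.comm₀, ← Category.assoc]⟩
  id_comp f := by apply Hom.ext <;> simp
  comp_id f := by apply Hom.ext <;> simp
  assoc f g h := by apply Hom.ext <;> simp

@[simp] lemma id_f₁ (M : TwoComplex A) : (𝟙 M : Hom M M).f₁ = 𝟙 M.X₁ := rfl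
@[simp] lemma id_f₀ (M : TwoComplex A) : (𝟙 M : Hom M M).f₀ = 𝟙 M.X₀ := rfl
@[simp] lemma comp_f₁ {M N P : TwoComplex A} (f : M ⟶ N) (g : N ⟶ P) :
    (f ≫ g).f₁ = f.f₁ ≫ g.f₁ := rfl
@[simp] lemma comp_f₀ {M N P : TwoComplex A} (f : M ⟶ N) (g : N ⟶ P) :
    (f ≫ g).f₀ = f.f₀ ≫ g.f₀ := rfl

/-- Homology in degree 0 : ker d₀ / im d₁. -/
noncomputable def H₀ (M : TwoComplex A) : A := (ShortComplex.mk M.d₁ M.d₀ M.w₁₀).homology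

/-- Homology in degree 1 : ker d₁ / im d₀. -/
noncomputable def H₁ (M : TwoComplex A) : A := (ShortComplex.mk M.d₀ M.d₁ M.w₀₁).homology

/-- A complex is acyclic if both homologies vanish. -/
def Acyclic (M : TwoComplex A) : Prop := IsZero (H₀ M) ∧ IsZero (H₁ M)

/-- Both terms are projective. -/
def ProjTerms (M : TwoComplex A) : Prop := Projective M.X₁ ∧ Projective M.X₀

/-- The acyclic complex `K_P = (P ⇄ P)` with `d₁ = id`, `d₀ = 0`. -/
def KP (P : A) : TwoComplex A := ⟨P, P, 𝟙 P, 0, by simp, by simp⟩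

/-- The acyclic complex `K_P* = (P ⇄ P)` with `d₁ = 0`, `d₀ = -id`. -/
def KPstar (P : A) : TwoComplex A := ⟨P, P, 0, -𝟙 P, by simp, by simp⟩

/-- Direct sum of two-periodic complexes. -/
noncomputable def dsum (M N : TwoComplex A) : TwoComplex A where
  X₁ := M.X₁ ⊞ N.X₁
  X₀ := M.X₀ ⊞ N.X₀
  d₁ := biprod.map M.d₁ N.d₁
  d₀ := biprod.map M.d₀ N.d₀
  w₁₀ := by ext <;> simp [M.w₁₀, N.w₁₀]
  w₀₁ := by ext <;> simp [M.w₀₁, N.w₀₁]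

/-- The zero complex. -/
noncomputable def zeroCplx : TwoComplex A :=
  ⟨(0 : A) , (0 : A), 0, 0, by simp, by simp⟩

/-- A pair of composable morphisms of two-periodic complexes is a short exact
sequence if it is degreewise a short exact sequence. -/
def IsShortExact {N L M : TwoComplex A} (i : N ⟶ L) (p : L ⟶ M) : Prop :=
  ∃ (w₁ : i.f₁ ≫ p.f₁ = 0) (w₀ : i.f₀ ≫ p.f₀ = 0),
    (ShortComplex.mk i.f₁ p.f₁ w₁).ShortExact ∧ (ShortComplex.mk i.f₀ p.f₀ w₀).ShortExact

/-- The defining condition of the exact structure `E₀`: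
`H_i(M) ≠ 0 → H_{i+1}(N) = 0` for `i = 0, 1`. -/
def E0Cond (N M : TwoComplex A) : Prop :=
  (¬ IsZero (H₀ M) → IsZero (H₁ N)) ∧ (¬ IsZero (H₁ M) → IsZero (H₀ N))

end TwoComplex

open TwoComplex

section

variable {A : Type u} [Category.{v} A] [Abelian A]

/-- An indecomposable object. -/
def Indec (X : A) : Prop :=
  ¬ IsZero X ∧ ∀ Y Z : A, Nonempty (X ≅ Y ⊞ Z) → IsZero Y ∨ IsZero Z

/-- Minimality of a map between projectives: no component of `f` between
indecomposable direct summands is an isomorphism. -/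
def IsMinimalMap {P Q : A} (f : P ⟶ Q) : Prop :=
  ∀ (P₁ P₂ Q₁ Q₂ : A) (eP : P ≅ P₁ ⊞ P₂) (eQ : Q ≅ Q₁ ⊞ Q₂),
    Indec P₁ → Indec Q₁ →
    ¬ IsIso (biprod.inl ≫ eP.inv ≫ f ≫ eQ.hom ≫ biprod.fst)

/-- A projective resolution `0 → P → Q → X → 0` of length one. -/
structure ProjRes (X : A) where
  P : A
  Q : A
  f : P ⟶ Q
  π : Q ⟶ X
  projP : Projective P
  projQ : Projective Q
  w : f ≫ π = 0
  shortExact : (ShortComplex.mk f π w).ShortExact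

/-- Minimality of a projective resolution. -/
def ProjRes.Minimal {X : A} (r : ProjRes X) : Prop := IsMinimalMap r.f

/-- The two-periodic complex `C_X = (P_X ⇄ Q_X)` (`d₁ = f`, `d₀ = 0`)
associated to a projective resolution of `X`. -/
def ProjRes.cplx {X : A} (r : ProjRes X) : TwoComplex A :=
  ⟨r.P, r.Q, r.f, 0, by simp, by simp⟩

end

/-- Hereditary: subobjects of projective objects are projective. -/
def Hereditary (A : Type u) [Category.{v} A] [Abelian A] : Prop :=
  ∀ (X P : A) (f : X ⟶ P), Projective P → Mono f → Projective X

attribute [reducible] KP ProjRes.cplx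

section AuxLemmas

variable {A : Type u} [Category.{v} A] [Abelian A]

/-- A split mono gives a biproduct decomposition. -/
lemma splitMono_biprod {R P : A} (t : R ⟶ P) (u : P ⟶ R) (h : t ≫ u = 𝟙 R) :
    ∃ (K : A) (e : P ≅ R ⊞ K), biprod.inl ≫ e.inv = t ∧ e.hom ≫ biprod.fst = u := by
  have hker : (𝟙 P - u ≫ t) ≫ u = 0 := by
    simp only [Preadditive.sub_comp, Category.id_comp, Category.assoc, h, Category.comp_id,
      sub_self]
  refine ⟨kernel u,
    ⟨biprod.lift u (kernel.lift u (𝟙 P - u ≫ t) hker), biprod.desc t (kernel.ι u), ?_, ?_⟩,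
    by simp, by simp⟩
  · rw [biprod.lift_desc, kernel.lift_ι]
    abel
  · apply biprod.hom_ext'
    · rw [← Category.assoc, biprod.inl_desc]
      apply biprod.hom_ext
      · simp [h]
      · rw [Category.assoc, biprod.lift_snd, Category.comp_id, biprod.inl_snd,
          ← cancel_mono (kernel.ι u), Category.assoc, kernel.lift_ι, zero_comp,
          Preadditive.comp_sub, Category.comp_id, ← Category.assoc, h, Category.id_comp,
          sub_self]
    · rw [← Category.assoc, biprod.inr_desc]
      apply biprod.hom_ext
      · simp [kernel.condition]
      · rw [Category.assoc, biprod.lift_snd, Category.comp_id, biprod.inr_snd,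
          ← cancel_mono (kernel.ι u), Category.assoc, kernel.lift_ι, Category.id_comp,
          Preadditive.comp_sub, Category.comp_id, ← Category.assoc, kernel.condition,
          zero_comp, sub_zero]

/-- A retract of a projective object is projective. -/
lemma projective_of_retract {P Q : A} (s : P ⟶ Q) (ρ : Q ⟶ P) (h : s ≫ ρ = 𝟙 P)
    (hQ : Projective Q) : Projective P where
  factors {E X} g e he := by
    obtain ⟨g', hg'⟩ := hQ.factors (ρ ≫ g) e
    exact ⟨s ≫ g', by rw [Category.assoc, hg', ← Category.assoc, h, Category.id_comp]⟩

/-- A minimal resolution complex admits no retract of the form `K_R` with `R`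
indecomposable. -/
lemma no_K_retract {X : A} (r : ProjRes X) (hr : r.Minimal) {R : A} (hR : Indec R)
    (t : KP R ⟶ r.cplx) (u : r.cplx ⟶ KP R) (htu : t ≫ u = 𝟙 (KP R)) : False := by
  have h1 : t.f₁ ≫ u.f₁ = 𝟙 R := by
    have := congrArg Hom.f₁ htu
    simpa using this
  have h0 : t.f₀ ≫ u.f₀ = 𝟙 R := by
    have := congrArg Hom.f₀ htu
    simpa using this
  have hu : r.f ≫ u.f₀ = u.f₁ := by
    simpa [KP] using u.comm₁
  obtain ⟨K, eP, hP1, hP2⟩ := splitMono_biprod (R := R) (P := r.P) t.f₁ u.f₁ h1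
  obtain ⟨K', eQ, hQ1, hQ2⟩ := splitMono_biprod (R := R) (P := r.Q) t.f₀ u.f₀ h0
  refine hr R K R K' eP eQ hR hR ?_
  have hcomp : biprod.inl ≫ eP.inv ≫ r.f ≫ eQ.hom ≫ biprod.fst = 𝟙 R := by
    rw [show eQ.hom ≫ biprod.fst = u.f₀ from hQ2, hu, ← Category.assoc, hP1, h1]
  rw [hcomp]
  infer_instance

/-- If a component of `d₁` between summands is an isomorphism, the complex has a
`K_{P₁}` retract. -/
lemma exists_K_retract {M : TwoComplex A} (hMd₀ : M.d₀ = 0) {P₁ P₂ Q₁ Q₂ : A}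
    (eP : M.X₁ ≅ P₁ ⊞ P₂) (eQ : M.X₀ ≅ Q₁ ⊞ Q₂) (c : P₁ ⟶ Q₁) (hiso : IsIso c)
    (hc : biprod.inl ≫ eP.inv ≫ M.d₁ ≫ eQ.hom ≫ biprod.fst = c) :
    ∃ (s : KP P₁ ⟶ M) (q : M ⟶ KP P₁),
      s ≫ q = 𝟙 (KP P₁) ∧ s.f₁ = biprod.inl ≫ eP.inv ∧ s.f₀ = s.f₁ ≫ M.d₁
        ∧ q.f₁ = M.d₁ ≫ q.f₀ := by
  haveI := hiso
  refine ⟨⟨biprod.inl ≫ eP.inv, (biprod.inl ≫ eP.inv) ≫ M.d₁, by simp [KP], by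
      simp [KP, hMd₀]⟩,
    ⟨M.d₁ ≫ eQ.hom ≫ biprod.fst ≫ inv c, eQ.hom ≫ biprod.fst ≫ inv c, by simp [KP], by
      simp [KP, hMd₀]⟩, ?_, rfl, rfl, rfl⟩
  have key : (biprod.inl ≫ eP.inv) ≫ M.d₁ ≫ eQ.hom ≫ biprod.fst ≫ inv c = 𝟙 P₁ := by
    rw [← cancel_mono c]
    simp only [Category.assoc, IsIso.inv_hom_id, Category.comp_id, Category.id_comp]
    simpa only [Category.assoc] using hc
  apply Hom.ext
  · simpa only [comp_f₁, id_f₁, Category.assoc] using key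
  · simpa only [comp_f₀, id_f₀, Category.assoc] using key

end AuxLemmas

/-- Let `A` be hereditary with enough projectives, `X ∈ A`
with minimal projective resolution giving `C_X`, and let
`0 → N• → C_X → M• → 0` be a short exact sequence in `C(P)` satisfying the
`E₀` condition `H_i(M•) ≠ 0 ⟹ H_{i+1}(N•) = 0`.  Then `M• ≅ C_B` and
`N• ≅ C_D` for objects `B`, `D` with minimal projective resolutions. -/
theorem conflation_under_CA_has_resolution_ends
    {A : Type u} [Category.{v} A] [Abelian A]
    [∀ X Y : A, Fintype (X ⟶ Y)] [EnoughProjectives A]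
    (hH : Hereditary A)
    (X : A) (r : ProjRes X) (hr : r.Minimal)
    (N M : TwoComplex A) (i : N ⟶ r.cplx) (p : r.cplx ⟶ M)
    (hN : ProjTerms N) (hM : ProjTerms M)
    (hses : IsShortExact i p) (hcond : E0Cond N M) :
    (∃ (B : A) (rB : ProjRes B), rB.Minimal ∧ Nonempty (M ≅ rB.cplx))
    ∧ (∃ (D : A) (rD : ProjRes D), rD.Minimal ∧ Nonempty (N ≅ rD.cplx)) := by
  obtain ⟨w₁, w₀, hse₁, hse₀⟩ := hses
  haveI hmono_i₁ : Mono i.f₁ := hse₁.mono_f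
  haveI hepi_p₁ : Epi p.f₁ := hse₁.epi_g
  haveI hmono_i₀ : Mono i.f₀ := hse₀.mono_f
  haveI hepi_p₀ : Epi p.f₀ := hse₀.epi_g
  haveI hmono_f : Mono r.f := r.shortExact.mono_f
  haveI hprojM₁ := hM.1
  haveI hprojM₀ := hM.2
  have pc : r.f ≫ p.f₀ = p.f₁ ≫ M.d₁ := p.comm₁
  have ic : N.d₁ ≫ i.f₀ = i.f₁ ≫ r.f := i.comm₁
  have hMd₀ : M.d₀ = 0 := by
    rw [← cancel_epi p.f₀, comp_zero, ← p.comm₀]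
    simp [ProjRes.cplx]
  have hNd₀ : N.d₀ = 0 := by
    rw [← cancel_mono i.f₁, zero_comp, i.comm₀]
    simp [ProjRes.cplx]
  haveI hmonoN : Mono N.d₁ := by
    haveI : Mono (N.d₁ ≫ i.f₀) := by rw [ic]; exact mono_comp _ _
    exact mono_of_mono N.d₁ i.f₀
  haveI hmonoM : Mono M.d₁ := by
    by_cases hz : IsZero (H₁ M)
    · exact ((ShortComplex.exact_iff_isZero_homology _).2 hz).mono_g hMd₀
    · have hN0 : IsZero (H₀ N) := hcond.2 hz
      haveI hepiN : Epi N.d₁ :=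
        ((ShortComplex.exact_iff_isZero_homology _).2 hN0).epi_f hNd₀
      haveI : IsIso N.d₁ := isIso_of_mono_of_epi _
      apply Preadditive.mono_of_cancel_zero
      intro T g hg
      obtain ⟨σ, hσ⟩ := Projective.factors (𝟙 M.X₁) p.f₁
      have haux : σ ≫ p.f₁ ≫ M.d₁ = M.d₁ := by
        rw [← Category.assoc, hσ, Category.id_comp]
      have h2 : ((g ≫ σ) ≫ r.f) ≫ p.f₀ = 0 := by
        simp only [Category.assoc]
        rw [pc, haux, hg]
      have hl := hse₀.exact.lift_f ((g ≫ σ) ≫ r.f) h2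
      set l := hse₀.exact.lift ((g ≫ σ) ≫ r.f) h2 with hldef
      have h4 : (l ≫ inv N.d₁ ≫ i.f₁) ≫ r.f = (g ≫ σ) ≫ r.f := by
        simp only [Category.assoc] at hl ⊢
        rw [← ic, IsIso.inv_hom_id_assoc]
        exact hl
      have h5 : l ≫ inv N.d₁ ≫ i.f₁ = g ≫ σ := by
        rw [← cancel_mono r.f]
        exact h4
      calc g = (g ≫ σ) ≫ p.f₁ := by rw [Category.assoc, hσ, Category.comp_id]
        _ = (l ≫ inv N.d₁ ≫ i.f₁) ≫ p.f₁ := by rw [h5]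
        _ = 0 := by simp only [Category.assoc, w₁, comp_zero]
  have hminM : IsMinimalMap M.d₁ := by
    intro P₁ P₂ Q₁ Q₂ eP eQ hP₁ hQ₁ hiso
    obtain ⟨s, q, hsq, hs₁, hs₀, hq₁⟩ := exists_K_retract hMd₀ eP eQ _ hiso rfl
    have h1 : s.f₁ ≫ q.f₁ = 𝟙 P₁ := by
      have := congrArg Hom.f₁ hsq; simpa using this
    haveI : Projective P₁ :=
      projective_of_retract (biprod.inl ≫ eP.inv) (eP.hom ≫ biprod.fst) (by simp) hM.1
    obtain ⟨t₁, ht₁⟩ := Projective.factors (P := P₁) s.f₁ p.f₁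
    refine no_K_retract r hr hP₁
      ⟨t₁, t₁ ≫ r.f, by simp [KP, ProjRes.cplx], by simp [KP, ProjRes.cplx]⟩ (p ≫ q) ?_
    apply Hom.ext
    · simp only [comp_f₁, id_f₁]
      rw [← Category.assoc, ht₁]
      exact h1
    · simp only [comp_f₀, id_f₀, Category.assoc]
      rw [reassoc_of% pc, ← hq₁, ← Category.assoc, ht₁]
      exact h1
  have hminN : IsMinimalMap N.d₁ := by
    intro P₁ P₂ Q₁ Q₂ eP eQ hP₁ hQ₁ hiso
    obtain ⟨s, q, hsq, hs₁, hs₀, hq₁⟩ := exists_K_retract hNd₀ eP eQ _ hiso rfl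
    have h1 : s.f₁ ≫ q.f₁ = 𝟙 P₁ := by
      have := congrArg Hom.f₁ hsq; simpa using this
    have h0 : s.f₀ ≫ q.f₀ = 𝟙 P₁ := by
      have := congrArg Hom.f₀ hsq; simpa using this
    obtain ⟨σ, hσ⟩ := Projective.factors (𝟙 M.X₀) p.f₀
    have hker : (𝟙 r.cplx.X₀ - p.f₀ ≫ σ) ≫ p.f₀ = 0 := by
      rw [Preadditive.sub_comp, Category.id_comp, Category.assoc, hσ, Category.comp_id,
        sub_self]
    have hρf := hse₀.exact.lift_f (𝟙 r.cplx.X₀ - p.f₀ ≫ σ) hker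
    set ρ := hse₀.exact.lift (𝟙 r.cplx.X₀ - p.f₀ ≫ σ) hker with hρdef
    have hρ : i.f₀ ≫ ρ = 𝟙 N.X₀ := by
      rw [← cancel_mono i.f₀, Category.assoc, hρf, Preadditive.comp_sub, Category.comp_id,
        ← Category.assoc, w₀, zero_comp, sub_zero, Category.id_comp]
    refine no_K_retract r hr hP₁ (s ≫ i)
      ⟨r.f ≫ ρ ≫ q.f₀, ρ ≫ q.f₀, by simp [KP, ProjRes.cplx], by simp [KP, ProjRes.cplx]⟩ ?_
    apply Hom.ext
    · simp only [comp_f₁, id_f₁, Category.assoc]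
      rw [← reassoc_of% ic, reassoc_of% hρ, ← hq₁]
      exact h1
    · simp only [comp_f₀, id_f₀, Category.assoc]
      rw [reassoc_of% hρ]
      exact h0
  constructor
  · refine ⟨cokernel M.d₁,
      ⟨M.X₁, M.X₀, M.d₁, cokernel.π M.d₁, hM.1, hM.2, cokernel.condition _,
        { exact := ShortComplex.exact_of_g_is_cokernel _ (cokernelIsCokernel M.d₁) }⟩,
      hminM, ⟨?_⟩⟩
    exact ⟨⟨𝟙 M.X₁, 𝟙 M.X₀, by simp [ProjRes.cplx], by simp [ProjRes.cplx, hMd₀]⟩,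
      ⟨𝟙 M.X₁, 𝟙 M.X₀, by simp [ProjRes.cplx], by simp [ProjRes.cplx, hMd₀]⟩,
      by apply Hom.ext <;> simp [ProjRes.cplx], by apply Hom.ext <;> simp [ProjRes.cplx]⟩
  · refine ⟨cokernel N.d₁,
      ⟨N.X₁, N.X₀, N.d₁, cokernel.π N.d₁, hN.1, hN.2, cokernel.condition _,
        { exact := ShortComplex.exact_of_g_is_cokernel _ (cokernelIsCokernel N.d₁) }⟩,
      hminN, ⟨?_⟩⟩
    exact ⟨⟨𝟙 N.X₁, 𝟙 N.X₀, by simp [ProjRes.cplx], by simp [ProjRes.cplx, hNd₀]⟩,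
      ⟨𝟙 N.X₁, 𝟙 N.X₀, by simp [ProjRes.cplx], by simp [ProjRes.cplx, hNd₀]⟩,
      by apply Hom.ext <;> simp [ProjRes.cplx], by apply Hom.ext <;> simp [ProjRes.cplx]⟩
end
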